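/- Let O be a self-adjoint operator on a finite-dimensional Hilbert space with ‖O‖ ≤ R, and Φ a unit vector with ⟨Φ, O²Φ⟩ ≥ μ² > 0. Define b_m = 2^{2m}(m!)²/(2m)! · ⟨Φ, O^{2m}Φ⟩. Then for every m ≥ 1: 1/(2R²) ≤ b_{m-1}/b_m ≤ 1/μ². -/
import Mathlib


noncomputable section

local notation "⟪" x ", " y "⟫" => @inner ℂ _ _ x y

/-- For self-adjoint `O` with `‖O‖ ≤ R` and a unit vector `Φ` with
`⟨Φ, O² Φ⟩ ≥ μ² > 0`, setting `b_m = 2^{2m}(m!)²/(2m)! ⟨Φ, O^{2m} Φ⟩`, one has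
`1/(2R²) ≤ b_{m-1}/b_m ≤ 1/μ²` for every `m ≥ 1`. -/
theorem stmt5 (n : ℕ)
    (O : EuclideanSpace ℂ (Fin n) →L[ℂ] EuclideanSpace ℂ (Fin n))
    (hO : IsSelfAdjoint O)
    (R : ℝ) (hR : ‖O‖ ≤ R)
    (Φ : EuclideanSpace ℂ (Fin n)) (hΦ : ‖Φ‖ = 1)
    (μ : ℝ) (hμ : 0 < μ) (hLRO : μ ^ 2 ≤ (⟪Φ, (O ^ 2) Φ⟫).re)
    (b : ℕ → ℝ)
    (hb : ∀ m : ℕ, b m = (2 ^ (2 * m) * ((Nat.factorial m : ℝ)) ^ 2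
      / (Nat.factorial (2 * m) : ℝ)) * (⟪Φ, (O ^ (2 * m)) Φ⟫).re) :
    ∀ m : ℕ, 1 ≤ m →
      1 / (2 * R ^ 2) ≤ b (m - 1) / b m ∧ b (m - 1) / b m ≤ 1 / μ ^ 2 := by
  have hsym : ∀ (m : ℕ) (x y : EuclideanSpace ℂ (Fin n)),
      ⟪(O ^ m) x, y⟫ = ⟪x, (O ^ m) y⟫ := fun m =>
    (ContinuousLinearMap.isSelfAdjoint_iff_isSymmetric.mp (hO.pow m))
  set a : ℕ → ℝ := fun m => (⟪Φ, (O ^ (2 * m)) Φ⟫).re with ha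
  have hsplit : ∀ m : ℕ, ⟪Φ, (O ^ (2 * m)) Φ⟫ = ⟪(O ^ m) Φ, (O ^ m) Φ⟫ := by
    intro m
    have h1 : (O ^ (2 * m)) Φ = (O ^ m) ((O ^ m) Φ) := by
      rw [two_mul, pow_add]; rfl
    rw [h1, ← hsym m]
  have hnorm : ∀ m, a m = ‖(O ^ m) Φ‖ ^ 2 := by
    intro m
    simp only [ha, hsplit m]
    exact inner_self_eq_norm_sq (𝕜 := ℂ) _
  have ha0 : a 0 = 1 := by
    rw [hnorm 0]; simp [hΦ]
  have ha1 : μ ^ 2 ≤ a 1 := by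
    simpa [ha] using hLRO
  have hanneg : ∀ m, 0 ≤ a m := fun m => (hnorm m) ▸ sq_nonneg _
  have hRpos : 0 < R := by
    have h1 : ‖(O ^ 1) Φ‖ ≤ ‖O‖ := by
      calc ‖(O ^ 1) Φ‖ ≤ ‖O ^ 1‖ * ‖Φ‖ := (O ^ 1).le_opNorm Φ
        _ ≤ ‖O‖ := by rw [pow_one, hΦ, mul_one]
    have h2 : μ ^ 2 ≤ ‖O‖ ^ 2 := by
      have h3 := hnorm 1
      nlinarith [norm_nonneg ((O ^ 1) Φ)]
    nlinarith [norm_nonneg O, sq_nonneg (‖O‖ - μ)]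
  have hstep : ∀ m, a (m + 1) ≤ R ^ 2 * a m := by
    intro m
    have h1 : (O ^ (m + 1)) Φ = O ((O ^ m) Φ) := by
      rw [pow_succ']; rfl
    have h2 : ‖(O ^ (m + 1)) Φ‖ ≤ R * ‖(O ^ m) Φ‖ := by
      rw [h1]
      calc ‖O ((O ^ m) Φ)‖ ≤ ‖O‖ * ‖(O ^ m) Φ‖ := O.le_opNorm _
        _ ≤ R * ‖(O ^ m) Φ‖ := by
          exact mul_le_mul_of_nonneg_right hR (norm_nonneg _)
    rw [hnorm, hnorm]
    nlinarith [norm_nonneg ((O ^ (m + 1)) Φ), norm_nonneg ((O ^ m) Φ)]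
  have hCS : ∀ m, a (m + 1) ^ 2 ≤ a m * a (m + 2) := by
    intro m
    have h1 : ⟪Φ, (O ^ (2 * (m + 1))) Φ⟫ = ⟪(O ^ m) Φ, (O ^ (m + 2)) Φ⟫ := by
      have h2 : (O ^ (2 * (m + 1))) Φ = (O ^ m) ((O ^ (m + 2)) Φ) := by
        rw [show 2 * (m + 1) = m + (m + 2) by ring, pow_add]; rfl
      rw [h2, ← hsym m]
    have h3 : a (m + 1) ≤ ‖(O ^ m) Φ‖ * ‖(O ^ (m + 2)) Φ‖ := by
      calc a (m + 1) = (⟪(O ^ m) Φ, (O ^ (m + 2)) Φ⟫).re := by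
            simp only [ha]; rw [h1]
        _ ≤ ‖⟪(O ^ m) Φ, (O ^ (m + 2)) Φ⟫‖ := Complex.re_le_norm _
        _ ≤ ‖(O ^ m) Φ‖ * ‖(O ^ (m + 2)) Φ‖ := norm_inner_le_norm _ _
    have h4 := hanneg (m + 1)
    rw [hnorm m, hnorm (m + 2)]
    nlinarith [norm_nonneg ((O ^ m) Φ), norm_nonneg ((O ^ (m + 2)) Φ)]
  have hgrow : ∀ m, 0 < a m ∧ μ ^ 2 * a m ≤ a (m + 1) := by
    intro m
    induction m with
    | zero => exact ⟨by rw [ha0]; norm_num, by rw [ha0]; simpa using ha1⟩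
    | succ k ih =>
      obtain ⟨hpos, hle⟩ := ih
      have hpos1 : 0 < a (k + 1) := lt_of_lt_of_le (by positivity) hle
      refine ⟨hpos1, ?_⟩
      have h1 : μ ^ 2 * a k * a (k + 1) ≤ a (k + 1) ^ 2 := by
        nlinarith
      have h2 := hCS k
      have h3 : μ ^ 2 * a (k + 1) * a k ≤ a (k + 2) * a k := by nlinarith
      exact le_of_mul_le_mul_right h3 hpos
  set c : ℕ → ℝ := fun m => 2 ^ (2 * m) * ((Nat.factorial m : ℝ)) ^ 2
      / (Nat.factorial (2 * m) : ℝ) with hc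
  have hcpos : ∀ m, 0 < c m := by
    intro m
    have := Nat.factorial_pos m
    have := Nat.factorial_pos (2 * m)
    positivity
  have hcrec : ∀ k : ℕ, c (k + 1) * (2 * (k : ℝ) + 1) = 2 * ((k : ℝ) + 1) * c k := by
    intro k
    simp only [hc]
    have hf1 : (Nat.factorial (2 * (k + 1)) : ℝ)
        = (2 * (k : ℝ) + 2) * (2 * (k : ℝ) + 1) * (Nat.factorial (2 * k) : ℝ) := by
      have : 2 * (k + 1) = (2 * k + 1) + 1 := by ring
      rw [this, Nat.factorial_succ, Nat.factorial_succ]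
      push_cast; ring
    have hf2 : (Nat.factorial (k + 1) : ℝ) = ((k : ℝ) + 1) * (Nat.factorial k : ℝ) := by
      rw [Nat.factorial_succ]; push_cast; ring
    have hne1 : (Nat.factorial (2 * k) : ℝ) ≠ 0 := by
      exact_mod_cast (Nat.factorial_pos (2 * k)).ne'
    rw [hf1, hf2]
    have hp : (2 : ℝ) ^ (2 * (k + 1)) = 4 * 2 ^ (2 * k) := by
      rw [show 2 * (k + 1) = 2 * k + 2 by ring, pow_add]; ring
    rw [hp]
    field_simp
    ring
  have hbc : ∀ m, b m = c m * a m := fun m => hb m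
  intro m hm
  obtain ⟨k, rfl⟩ : ∃ k, m = k + 1 := ⟨m - 1, (Nat.succ_pred_eq_of_pos hm).symm⟩
  simp only [Nat.add_sub_cancel]
  have hak := (hgrow k).1
  have hak1 : 0 < a (k + 1) := (hgrow (k + 1)).1
  have hgk := (hgrow k).2
  have hck := hcpos k
  have hck1 := hcpos (k + 1)
  have hbk : 0 < b k := by rw [hbc]; positivity
  have hbk1 : 0 < b (k + 1) := by rw [hbc]; positivity
  have hknn : (0:ℝ) ≤ (k:ℝ) := Nat.cast_nonneg k
  have hcle : c (k + 1) ≤ 2 * c k := by nlinarith [hcrec k]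
  have hcge : c k ≤ c (k + 1) := by nlinarith [hcrec k]
  constructor
  · rw [div_le_div_iff₀ (by positivity) hbk1]
    have h1 : b (k + 1) ≤ 2 * R ^ 2 * b k := by
      rw [hbc, hbc]
      calc c (k + 1) * a (k + 1) ≤ (2 * c k) * (R ^ 2 * a k) := by
            apply mul_le_mul hcle (hstep k) (hanneg _) (by positivity)
        _ = 2 * R ^ 2 * (c k * a k) := by ring
    linarith
  · rw [div_le_div_iff₀ hbk1 (by positivity)]
    have h1 : μ ^ 2 * b k ≤ b (k + 1) := by
      rw [hbc, hbc]
      calc μ ^ 2 * (c k * a k) = c k * (μ ^ 2 * a k) := by ring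
        _ ≤ c (k + 1) * a (k + 1) := by
            apply mul_le_mul hcge hgk (by positivity) (le_of_lt hck1)
    linarith
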